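/- Let R₁ ≥ 1 and C > 0, and let v₀, v₁ : [R₁,∞) → ℝ satisfy |v₀(r)| ≤ C·r^{1/6} and |v₁(r)| ≤ C·r^{−2} for all r ≥ R₁, and |v₀(r) − v₀(r′)| ≤ C·( r^{−4}·|v₀(r)|³ + r^{−1}·|v₁(r)|³ ) for all r, r′ with R₁ ≤ r ≤ r′ ≤ 2r. Then there exist a real number ℓ₀ and a constant C′ such that |v₀(r) − ℓ₀| ≤ C′·r^{−4} for all r ≥ R₁; in particular r³·v₀(r)/r³ = v₀(r) → ℓ₀ as r → ∞. -/

import Mathlib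

open Set Filter

lemma dyadic_chain (R₁ A : ℝ) (hR : 0 < R₁) (hA : 0 ≤ A) (q : ℕ) (hq : 1 ≤ q)
    (f : ℝ → ℝ)
    (h : ∀ r r', R₁ ≤ r → r ≤ r' → r' ≤ 2 * r → |f r - f r'| ≤ A / r ^ q) :
    ∀ r r', R₁ ≤ r → r ≤ r' → |f r - f r'| ≤ 2 * A / r ^ q := by
  suffices H : ∀ n : ℕ, ∀ r r', R₁ ≤ r → r ≤ r' → r' ≤ 2 ^ n * r →
      |f r - f r'| ≤ 2 * A / r ^ q by
    intro r r' hr hrr'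
    have hr0 : 0 < r := lt_of_lt_of_le hR hr
    obtain ⟨n, hn⟩ := pow_unbounded_of_one_lt (r' / r) (one_lt_two (α := ℝ))
    refine H n r r' hr hrr' ?_
    rw [div_lt_iff₀ hr0] at hn
    linarith
  intro n
  induction n with
  | zero =>
    intro r r' hr hrr' hle
    have hr0 : 0 < r := lt_of_lt_of_le hR hr
    have : r' = r := le_antisymm (by simpa using hle) hrr'
    rw [this]
    simp only [sub_self, abs_zero]
    positivity
  | succ n ih =>
    intro r r' hr hrr' hle
    have hr0 : 0 < r := lt_of_lt_of_le hR hr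
    by_cases hc : r' ≤ 2 * r
    · calc |f r - f r'| ≤ A / r ^ q := h r r' hr hrr' hc
        _ ≤ 2 * A / r ^ q := by
          rw [mul_div_assoc]
          have := div_nonneg hA (pow_nonneg hr0.le q)
          linarith
    · push_neg at hc
      have h2r : R₁ ≤ 2 * r := le_trans hr (by linarith)
      have key := ih (2 * r) r' h2r hc.le (by rw [pow_succ] at hle; linarith [hle])
      have h1 := h r (2 * r) hr (by linarith) le_rfl
      have htri := abs_sub_le (f r) (f (2 * r)) (f r')
      have hpow : (2 * r) ^ q = 2 ^ q * r ^ q := mul_pow 2 r q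
      have h2q : (2:ℝ) ≤ 2 ^ q := by
        calc (2:ℝ) = 2 ^ 1 := (pow_one 2).symm
        _ ≤ 2 ^ q := pow_le_pow_right₀ (by norm_num) hq
      have hstep : 2 * A / (2 * r) ^ q ≤ A / r ^ q := by
        rw [hpow, div_le_div_iff₀ (by positivity) (by positivity)]
        nlinarith [pow_pos hr0 q, mul_nonneg hA (pow_pos hr0 q).le]
      calc |f r - f r'| ≤ |f r - f (2*r)| + |f (2*r) - f r'| := htri
        _ ≤ A / r ^ q + 2 * A / (2*r) ^ q := add_le_add h1 key
        _ ≤ A / r ^ q + A / r ^ q := by linarith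
        _ = 2 * A / r ^ q := by ring

/-- From a long-range bound, extract the limit and keep the rate. -/
lemma limit_of_longrange (R₁ A : ℝ) (hR : 1 ≤ R₁) (hA : 0 ≤ A) (q : ℕ) (hq : 1 ≤ q)
    (f : ℝ → ℝ)
    (h : ∀ r r', R₁ ≤ r → r ≤ r' → |f r - f r'| ≤ A / r ^ q) :
    ∃ ℓ : ℝ, (∀ r ≥ R₁, |f r - ℓ| ≤ A / r ^ q) ∧
      Tendsto f atTop (nhds ℓ) := by
  have hR0 : (0:ℝ) < R₁ := lt_of_lt_of_le one_pos hR
  set u : ℕ → ℝ := fun n => f (R₁ + n) with hu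
  have hmem : ∀ n : ℕ, R₁ ≤ R₁ + (n:ℝ) := fun n => by
    have : (0:ℝ) ≤ n := Nat.cast_nonneg n
    linarith
  have hb : Tendsto (fun N : ℕ => A / (R₁ + (N:ℝ)) ^ q) atTop (nhds 0) := by
    apply Tendsto.div_atTop (tendsto_const_nhds)
    exact (tendsto_pow_atTop (Nat.one_le_iff_ne_zero.mp hq)).comp
      (tendsto_atTop_add_const_left _ R₁ tendsto_natCast_atTop_atTop)
  have key : ∀ n m : ℕ, n ≤ m → dist (u n) (u m) ≤ A / (R₁ + (n:ℝ)) ^ q := by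
    intro n m hnm
    rw [Real.dist_eq]
    have hle : R₁ + (n:ℝ) ≤ R₁ + (m:ℝ) := by
      have : (n:ℝ) ≤ m := Nat.cast_le.mpr hnm
      linarith
    exact h _ _ (hmem n) hle
  have mono : ∀ N n : ℕ, N ≤ n → A / (R₁ + (n:ℝ)) ^ q ≤ A / (R₁ + (N:ℝ)) ^ q := by
    intro N n hNn
    have : (N:ℝ) ≤ n := Nat.cast_le.mpr hNn
    apply div_le_div_of_nonneg_left hA (by positivity)
    apply pow_le_pow_left₀ (by positivity)
    linarith
  have hcauchy : CauchySeq u := by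
    refine cauchySeq_of_le_tendsto_0 (fun N : ℕ => A / (R₁ + (N:ℝ)) ^ q)
      (fun n m N hn hm => ?_) hb
    rcases le_total n m with hnm | hnm
    · exact (key n m hnm).trans (mono N n hn)
    · rw [dist_comm]
      exact (key m n hnm).trans (mono N m hm)
  obtain ⟨ℓ, hℓ⟩ := cauchySeq_tendsto_of_complete hcauchy
  have hbound : ∀ r ≥ R₁, |f r - ℓ| ≤ A / r ^ q := by
    intro r hr
    have hlim : Tendsto (fun n : ℕ => |f r - u n|) atTop (nhds |f r - ℓ|) :=
      (tendsto_const_nhds.sub hℓ).abs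
    refine le_of_tendsto hlim ?_
    filter_upwards [eventually_ge_atTop (Nat.ceil r)] with n hn
    apply h r (R₁ + n) hr
    have h1 : r ≤ (n:ℝ) := le_trans (Nat.le_ceil r) (Nat.cast_le.mpr hn)
    linarith
  refine ⟨ℓ, hbound, ?_⟩
  rw [tendsto_iff_dist_tendsto_zero]
  apply squeeze_zero' (g := fun r => A / r ^ q)
  · filter_upwards with r using dist_nonneg
  · filter_upwards [eventually_ge_atTop R₁] with r hr
    rw [Real.dist_eq]; exact hbound r hr
  · apply Tendsto.div_atTop tendsto_const_nhds
    exact (tendsto_pow_atTop (Nat.one_le_iff_ne_zero.mp hq)).comp tendsto_id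

theorem v0_limit_with_rate (R₁ C : ℝ) (hR₁ : 1 ≤ R₁) (hC : 0 < C)
    (v₀ v₁ : ℝ → ℝ)
    (hg₀ : ∀ r ≥ R₁, |v₀ r| ≤ C * r ^ ((1:ℝ)/6))
    (hg₁ : ∀ r ≥ R₁, |v₁ r| ≤ C / r ^ 2)
    (hdiff : ∀ r r' : ℝ, R₁ ≤ r → r ≤ r' → r' ≤ 2 * r →
      |v₀ r - v₀ r'| ≤ C * (|v₀ r| ^ 3 / r ^ 4 + |v₁ r| ^ 3 / r)) :
    ∃ ℓ₀ C' : ℝ, (∀ r ≥ R₁, |v₀ r - ℓ₀| ≤ C' / r ^ 4) ∧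
      Tendsto v₀ atTop (nhds ℓ₀) := by
  have hR0 : (0:ℝ) < R₁ := lt_of_lt_of_le one_pos hR₁
  have hv1cube : ∀ r, R₁ ≤ r → |v₁ r| ^ 3 ≤ C ^ 3 / r ^ 6 := by
    intro r hr
    calc |v₁ r| ^ 3 ≤ (C / r ^ 2) ^ 3 := pow_le_pow_left₀ (abs_nonneg _) (hg₁ r hr) 3
      _ = C ^ 3 / r ^ 6 := by rw [div_pow, ← pow_mul]
  -- First step bound: increments ≤ 2C⁴ / r³
  have step1 : ∀ r r', R₁ ≤ r → r ≤ r' → r' ≤ 2 * r →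
      |v₀ r - v₀ r'| ≤ (2 * C ^ 4) / r ^ 3 := by
    intro r r' hr hrr' hle
    have hr1 : (1:ℝ) ≤ r := le_trans hR₁ hr
    have hr0 : (0:ℝ) < r := lt_of_lt_of_le one_pos hr1
    have hv0cube : |v₀ r| ^ 3 ≤ C ^ 3 * r := by
      calc |v₀ r| ^ 3 ≤ (C * r ^ ((1:ℝ)/6)) ^ 3 :=
            pow_le_pow_left₀ (abs_nonneg _) (hg₀ r hr) 3
        _ = C ^ 3 * (r ^ ((1:ℝ)/6)) ^ 3 := by ring
        _ = C ^ 3 * r ^ ((1:ℝ)/2) := by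
            rw [← Real.rpow_natCast (r ^ ((1:ℝ)/6)) 3, ← Real.rpow_mul hr0.le]
            norm_num
        _ ≤ C ^ 3 * r := by
            gcongr
            calc r ^ ((1:ℝ)/2) ≤ r ^ (1:ℝ) :=
                  Real.rpow_le_rpow_of_exponent_le hr1 (by norm_num)
              _ = r := Real.rpow_one r
    have e1 : C ^ 3 * r / r ^ 4 = C ^ 3 / r ^ 3 := by
      field_simp
    have e2 : (C ^ 3 / r ^ 6) / r = C ^ 3 / r ^ 7 := by
      rw [div_div, ← pow_succ]
    have e3 : C ^ 3 / r ^ 7 ≤ C ^ 3 / r ^ 3 := by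
      apply div_le_div_of_nonneg_left (by positivity) (by positivity)
      exact pow_le_pow_right₀ hr1 (by norm_num)
    calc |v₀ r - v₀ r'| ≤ C * (|v₀ r| ^ 3 / r ^ 4 + |v₁ r| ^ 3 / r) :=
          hdiff r r' hr hrr' hle
      _ ≤ C * ((C ^ 3 * r) / r ^ 4 + (C ^ 3 / r ^ 6) / r) := by
          gcongr
          exact hv1cube r hr
      _ = C * (C ^ 3 / r ^ 3 + C ^ 3 / r ^ 7) := by rw [e1, e2]
      _ ≤ C * (C ^ 3 / r ^ 3 + C ^ 3 / r ^ 3) :=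
          mul_le_mul_of_nonneg_left (by linarith) hC.le
      _ = (2 * C ^ 4) / r ^ 3 := by ring
  -- chained bound with exponent 3
  have long1 : ∀ r r', R₁ ≤ r → r ≤ r' →
      |v₀ r - v₀ r'| ≤ 2 * (2 * C ^ 4) / r ^ 3 :=
    dyadic_chain R₁ (2 * C ^ 4) hR0 (by positivity) 3 (by norm_num) v₀ step1
  obtain ⟨ℓ, hℓbd, -⟩ := limit_of_longrange R₁ (2 * (2 * C ^ 4)) hR₁
    (by positivity) 3 (by norm_num) v₀ long1
  -- boundedness of v₀
  set M : ℝ := |ℓ| + 4 * C ^ 4 with hM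
  have hM0 : 0 ≤ M := by positivity
  have hbdd : ∀ r, R₁ ≤ r → |v₀ r| ≤ M := by
    intro r hr
    have hr1 : (1:ℝ) ≤ r := le_trans hR₁ hr
    have hr0 : (0:ℝ) < r := lt_of_lt_of_le one_pos hr1
    have h1 := hℓbd r hr
    have h2 : 2 * (2 * C ^ 4) / r ^ 3 ≤ 4 * C ^ 4 := by
      rw [div_le_iff₀ (by positivity)]
      nlinarith [pow_le_pow_right₀ hr1 (Nat.zero_le 3), pow_pos hr0 3,
        pow_pos hC 4, one_le_pow₀ hr1 (n := 3)]
    calc |v₀ r| = |(v₀ r - ℓ) + ℓ| := by ring_nf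
      _ ≤ |v₀ r - ℓ| + |ℓ| := abs_add_le _ _
      _ ≤ 4 * C ^ 4 + |ℓ| := add_le_add (h1.trans h2) le_rfl
      _ = M := by rw [hM]; ring
  -- second step bound: increments ≤ (C*M³ + C⁴)/r⁴
  have step2 : ∀ r r', R₁ ≤ r → r ≤ r' → r' ≤ 2 * r →
      |v₀ r - v₀ r'| ≤ (C * M ^ 3 + C ^ 4) / r ^ 4 := by
    intro r r' hr hrr' hle
    have hr1 : (1:ℝ) ≤ r := le_trans hR₁ hr
    have hr0 : (0:ℝ) < r := lt_of_lt_of_le one_pos hr1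
    have hv0cube : |v₀ r| ^ 3 ≤ M ^ 3 :=
      pow_le_pow_left₀ (abs_nonneg _) (hbdd r hr) 3
    have e2 : (C ^ 3 / r ^ 6) / r = C ^ 3 / r ^ 7 := by
      rw [div_div, ← pow_succ]
    have e3 : C ^ 3 / r ^ 7 ≤ C ^ 3 / r ^ 4 := by
      apply div_le_div_of_nonneg_left (by positivity) (by positivity)
      exact pow_le_pow_right₀ hr1 (by norm_num)
    calc |v₀ r - v₀ r'| ≤ C * (|v₀ r| ^ 3 / r ^ 4 + |v₁ r| ^ 3 / r) :=
          hdiff r r' hr hrr' hle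
      _ ≤ C * (M ^ 3 / r ^ 4 + (C ^ 3 / r ^ 6) / r) := by
          gcongr
          exact hv1cube r hr
      _ = C * (M ^ 3 / r ^ 4 + C ^ 3 / r ^ 7) := by rw [e2]
      _ ≤ C * (M ^ 3 / r ^ 4 + C ^ 3 / r ^ 4) :=
          mul_le_mul_of_nonneg_left (by linarith) hC.le
      _ = (C * M ^ 3 + C ^ 4) / r ^ 4 := by ring
  have long2 : ∀ r r', R₁ ≤ r → r ≤ r' →
      |v₀ r - v₀ r'| ≤ 2 * (C * M ^ 3 + C ^ 4) / r ^ 4 :=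
    dyadic_chain R₁ (C * M ^ 3 + C ^ 4) hR0 (by positivity) 4 (by norm_num) v₀ step2
  obtain ⟨ℓ₀, hbd, htend⟩ := limit_of_longrange R₁ (2 * (C * M ^ 3 + C ^ 4)) hR₁
    (by positivity) 4 (by norm_num) v₀ long2
  exact ⟨ℓ₀, 2 * (C * M ^ 3 + C ^ 4), hbd, htend⟩
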